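/- Equivalent forms of the second dominance condition (Lemma B.5). Let λ, μ, ω, η be partitions with |λ| ≥ |ω| and |λ| + |μ| = |ω| + |η|, and set d = |λ| − |ω|. Then the following three conditions are equivalent: (1) for every j ≥ 1, |λ| + μ_1 + ⋯ + μ_j ≥ |ω| + η_1 + ⋯ + η_j; (2) η' ⪰ μ' ∪ (1^d), i.e. the partition obtained by appending d parts equal to 1 to μ' is dominated by η'; (3) η' ⪰ μ'. -/
import Mathlib


noncomputable section

namespace DoubleMacdonald

/-- A partition, encoded as a weakly decreasing function `ℕ → ℕ` (0-indexed: `f 0 = λ₁`)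
with finitely many nonzero values. -/
def IsPartition (f : ℕ → ℕ) : Prop :=
  (∀ ⦃i j : ℕ⦄, i ≤ j → f j ≤ f i) ∧ ∃ N, ∀ i, N ≤ i → f i = 0

/-- The size `|λ| = Σᵢ λᵢ` of a partition. -/
def psize (f : ℕ → ℕ) : ℕ := ∑ᶠ i, f i

/-- The number `ℓ(λ)` of nonzero parts of a partition. -/
def plen (f : ℕ → ℕ) : ℕ := Nat.card {i : ℕ | 1 ≤ f i}

/-- The conjugate partition: `λ'ⱼ = #{i : λᵢ ≥ j}` (0-indexed: `conj f j = λ'_{j+1}`). -/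
def conj (f : ℕ → ℕ) : ℕ → ℕ := fun j => Nat.card {i : ℕ | j + 1 ≤ f i}

/-- The staircase partition `δ^m = (m-1, m-2, …, 1, 0)`. -/
def delta (m : ℕ) : ℕ → ℕ := fun i => m - 1 - i

/-- Componentwise sum of partitions. -/
def addF (f g : ℕ → ℕ) : ℕ → ℕ := fun i => f i + g i

/-- Union `λ ∪ μ` of partitions: the weakly decreasing rearrangement of the combined
multiset of parts, defined via `(λ ∪ μ)' = λ' + μ'`. -/
def unionF (f g : ℕ → ℕ) : ℕ → ℕ := conj (addF (conj f) (conj g))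

/-- Partial sum `λ₁ + ⋯ + λ_k`. -/
def psum (f : ℕ → ℕ) (k : ℕ) : ℕ := ∑ i ∈ Finset.range k, f i

/-- The statistic `n(λ) = Σᵢ (i-1) λᵢ`. -/
def nstat (f : ℕ → ℕ) : ℕ := ∑ᶠ i, i * f i

/-- The (extended) dominance order: `f ⪰ g` iff all partial sums of `f` dominate those of `g`. -/
def Dominates (f g : ℕ → ℕ) : Prop := ∀ k, psum g k ≤ psum f k

/-- The partition `(1^d)` consisting of `d` parts equal to `1`. -/
def ones (d : ℕ) : ℕ → ℕ := fun i => if i < d then 1 else 0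

variable {f : ℕ → ℕ}

lemma conj_eq_card (hf : IsPartition f) {N : ℕ} (hN : ∀ i, N ≤ i → f i = 0) (k : ℕ) :
    conj f k = ((Finset.range N).filter (fun i => k + 1 ≤ f i)).card := by
  have hset : {i : ℕ | k + 1 ≤ f i} = ↑((Finset.range N).filter (fun i => k + 1 ≤ f i)) := by
    ext i
    simp only [Set.mem_setOf_eq, Finset.coe_filter, Finset.mem_range]
    constructor
    · intro h
      refine ⟨?_, h⟩
      by_contra h'
      push_neg at h'
      have := hN i h'
      omega
    · exact fun h => h.2
  show Nat.card {i : ℕ | k + 1 ≤ f i} = _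
  rw [hset, Nat.card_coe_set_eq, Set.ncard_coe_finset]

lemma lt_conj_iff (hf : IsPartition f) (k i : ℕ) : i < conj f k ↔ k + 1 ≤ f i := by
  obtain ⟨hdec, N, hN⟩ := id hf
  rw [conj_eq_card hf hN]
  constructor
  · intro h
    by_contra h'
    push_neg at h'
    have hsub : (Finset.range N).filter (fun i => k + 1 ≤ f i) ⊆ Finset.range i := by
      intro j hj
      rw [Finset.mem_filter] at hj
      rw [Finset.mem_range]
      by_contra hji
      push_neg at hji
      have := hdec hji
      omega
    have := Finset.card_le_card hsub
    rw [Finset.card_range] at this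
    omega
  · intro h
    have hiN : i < N := by
      by_contra hiN
      push_neg at hiN
      have := hN i hiN
      omega
    have hsub : Finset.range (i + 1) ⊆ (Finset.range N).filter (fun i => k + 1 ≤ f i) := by
      intro j hj
      rw [Finset.mem_range] at hj
      rw [Finset.mem_filter, Finset.mem_range]
      have hji : j ≤ i := by omega
      exact ⟨lt_of_le_of_lt hji hiN, le_trans h (hdec hji)⟩
    have := Finset.card_le_card hsub
    rw [Finset.card_range] at this
    omega

lemma conj_le (hf : IsPartition f) {N : ℕ} (hN : ∀ i, N ≤ i → f i = 0) (k : ℕ) :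
    conj f k ≤ N := by
  by_contra h
  push_neg at h
  have := (lt_conj_iff hf k N).mp h
  have := hN N le_rfl
  omega

lemma conj_conj (hf : IsPartition f) : conj (conj f) = f := by
  funext i
  show Nat.card {k : ℕ | i + 1 ≤ conj f k} = f i
  have : {k : ℕ | i + 1 ≤ conj f k} = ↑(Finset.range (f i)) := by
    ext k
    simp only [Set.mem_setOf_eq, Finset.coe_range, Set.mem_Iio]
    rw [show i + 1 ≤ conj f k ↔ i < conj f k from Iff.rfl, lt_conj_iff hf]
    omega
  rw [this, Nat.card_coe_set_eq, Set.ncard_coe_finset, Finset.card_range]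

lemma conj_ones (d : ℕ) : conj (ones d) = fun j => if j = 0 then d else 0 := by
  funext j
  show Nat.card {i : ℕ | j + 1 ≤ ones d i} = _
  rcases Nat.eq_zero_or_pos j with hj | hj
  · subst hj
    have : {i : ℕ | 0 + 1 ≤ ones d i} = ↑(Finset.range d) := by
      ext i
      simp only [Set.mem_setOf_eq, Finset.coe_range, Set.mem_Iio, ones]
      split_ifs with h <;> omega
    rw [this, Nat.card_coe_set_eq, Set.ncard_coe_finset, Finset.card_range]
    simp
  · have : {i : ℕ | j + 1 ≤ ones d i} = (∅ : Set ℕ) := by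
      ext i
      simp only [Set.mem_setOf_eq, Set.mem_empty_iff_false, iff_false, ones]
      split_ifs <;> omega
    rw [this, Nat.card_coe_set_eq, Set.ncard_empty, if_neg (by omega)]

lemma psize_eq {N : ℕ} (hN : ∀ i, N ≤ i → f i = 0) : psize f = ∑ i ∈ Finset.range N, f i := by
  apply finsum_eq_sum_of_support_subset
  intro i hi
  simp only [Function.mem_support] at hi
  simp only [Finset.coe_range, Set.mem_Iio]
  by_contra h
  push_neg at h
  exact hi (hN i h)

lemma psum_conj (hf : IsPartition f) {N : ℕ} (hN : ∀ i, N ≤ i → f i = 0) (k : ℕ) :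
    psum (conj f) k = ∑ i ∈ Finset.range N, min (f i) k := by
  unfold psum
  calc ∑ j ∈ Finset.range k, conj f j
      = ∑ j ∈ Finset.range k, ∑ i ∈ Finset.range N, (if j + 1 ≤ f i then 1 else 0) := by
        refine Finset.sum_congr rfl fun j _ => ?_
        rw [conj_eq_card hf hN, Finset.card_filter]
    _ = ∑ i ∈ Finset.range N, ∑ j ∈ Finset.range k, (if j + 1 ≤ f i then 1 else 0) :=
        Finset.sum_comm
    _ = ∑ i ∈ Finset.range N, min (f i) k := by
        refine Finset.sum_congr rfl fun i _ => ?_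
        rw [← Finset.card_filter]
        have : Finset.filter (fun j => j + 1 ≤ f i) (Finset.range k)
            = Finset.range (min (f i) k) := by
          ext j
          simp only [Finset.mem_filter, Finset.mem_range]
          omega
        rw [this, Finset.card_range]

lemma sum_sub_add (f : ℕ → ℕ) (t k : ℕ) (h : ∀ i < t, k ≤ f i) :
    ∑ i ∈ Finset.range t, f i = (∑ i ∈ Finset.range t, (f i - k)) + t * k := by
  have h1 : ∑ i ∈ Finset.range t, f i = ∑ i ∈ Finset.range t, ((f i - k) + k) :=
    Finset.sum_congr rfl fun i hi => by
      have := h i (Finset.mem_range.mp hi); omega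
  rw [h1, Finset.sum_add_distrib, Finset.sum_const, Finset.card_range, smul_eq_mul]

lemma sum_le_sub_add (f : ℕ → ℕ) (t k : ℕ) :
    ∑ i ∈ Finset.range t, f i ≤ (∑ i ∈ Finset.range t, (f i - k)) + t * k := by
  calc ∑ i ∈ Finset.range t, f i ≤ ∑ i ∈ Finset.range t, ((f i - k) + k) :=
        Finset.sum_le_sum fun i _ => by omega
    _ = (∑ i ∈ Finset.range t, (f i - k)) + t * k := by
        rw [Finset.sum_add_distrib, Finset.sum_const, Finset.card_range, smul_eq_mul]

lemma sum_sub_trunc (f : ℕ → ℕ) (t M k : ℕ) (ht : t ≤ M) (h : ∀ i, t ≤ i → f i ≤ k) :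
    ∑ i ∈ Finset.range M, (f i - k) = ∑ i ∈ Finset.range t, (f i - k) := by
  symm
  apply Finset.sum_subset (Finset.range_subset_range.mpr ht)
  intro x hx hnx
  rw [Finset.mem_range] at hx hnx
  push_neg at hnx
  have := h x hnx
  omega

/-- **Equivalent forms of the second dominance condition** (Lemma B.5).
Let `λ, μ, ω, η` be partitions with `|λ| ≥ |ω|` and `|λ| + |μ| = |ω| + |η|`, and set
`d = |λ| − |ω|`.  The following are equivalent:
(1) `|λ| + μ₁ + ⋯ + μⱼ ≥ |ω| + η₁ + ⋯ + ηⱼ` for all `j ≥ 1`;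
(2) `η' ⪰ μ' ∪ (1^d)`;
(3) `η' ⪰ μ'`. -/
theorem second_dominance_condition_equiv (lam mu om eta : ℕ → ℕ)
    (hlam : IsPartition lam) (hmu : IsPartition mu)
    (hom : IsPartition om) (heta : IsPartition eta)
    (hge : psize om ≤ psize lam)
    (heq : psize lam + psize mu = psize om + psize eta) :
    ((∀ j, 1 ≤ j → psize om + psum eta j ≤ psize lam + psum mu j) ↔
        Dominates (conj eta) (unionF (conj mu) (ones (psize lam - psize om)))) ∧
    (Dominates (conj eta) (unionF (conj mu) (ones (psize lam - psize om))) ↔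
        Dominates (conj eta) (conj mu)) := by
  obtain ⟨Nm, hNm⟩ := hmu.2
  obtain ⟨Ne, hNe⟩ := heta.2
  set d := psize lam - psize om with hd
  set nu : ℕ → ℕ := fun i => mu i + if i = 0 then d else 0 with hnudef
  set N := Nm + Ne + 1 with hNdef
  have hNmu : ∀ i, N ≤ i → mu i = 0 := fun i hi => hNm i (by omega)
  have hNeta : ∀ i, N ≤ i → eta i = 0 := fun i hi => hNe i (by omega)
  have hNnu : ∀ i, N ≤ i → nu i = 0 := fun i hi => by
    simp only [hnudef]
    rw [hNmu i hi, if_neg (by omega)]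
  have hnupart : IsPartition nu := by
    constructor
    · intro i j hij
      have h1 := hmu.1 hij
      simp only [hnudef]
      split_ifs <;> omega
    · exact ⟨N, hNnu⟩
  have hunion : unionF (conj mu) (ones d) = conj nu := by
    unfold unionF
    rw [conj_conj hmu, conj_ones]
    rfl
  have hpsum_nu : ∀ t, 1 ≤ t → psum nu t = psum mu t + d := by
    intro t ht
    unfold psum
    simp only [hnudef]
    rw [Finset.sum_add_distrib]
    congr 1
    rw [Finset.sum_ite_eq' (Finset.range t) 0 (fun _ => d)]
    rw [if_pos (Finset.mem_range.mpr (by omega))]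
  have hsizemu : psize mu = ∑ i ∈ Finset.range N, mu i := psize_eq hNmu
  have hsizeeta : psize eta = ∑ i ∈ Finset.range N, eta i := psize_eq hNeta
  have hsizenu : psize nu = psize mu + d := by
    rw [psize_eq hNnu, hsizemu]
    exact hpsum_nu N (by omega)
  have hsz : psize eta = psize mu + d := by omega
  -- (1) → (2)
  have key12 : (∀ j, 1 ≤ j → psum eta j ≤ d + psum mu j) →
      Dominates (conj eta) (conj nu) := by
    intro h k
    rw [psum_conj heta hNeta k, psum_conj hnupart hNnu k]
    set t := conj eta k with htdef
    have ht : t ≤ N := conj_le heta hNeta k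
    have hSTe : (∑ i ∈ Finset.range N, min (eta i) k) + (∑ i ∈ Finset.range N, (eta i - k))
        = ∑ i ∈ Finset.range N, eta i := by
      rw [← Finset.sum_add_distrib]
      exact Finset.sum_congr rfl fun i _ => by omega
    have hSTn : (∑ i ∈ Finset.range N, min (nu i) k) + (∑ i ∈ Finset.range N, (nu i - k))
        = ∑ i ∈ Finset.range N, nu i := by
      rw [← Finset.sum_add_distrib]
      exact Finset.sum_congr rfl fun i _ => by omega
    have hsizenuN : ∑ i ∈ Finset.range N, nu i = psize nu := (psize_eq hNnu).symm
    have htrunc : ∑ i ∈ Finset.range N, (eta i - k) = ∑ i ∈ Finset.range t, (eta i - k) := by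
      apply sum_sub_trunc eta t N k ht
      intro i hi
      by_contra h'
      push_neg at h'
      have := (lt_conj_iff heta k i).mpr h'
      omega
    rcases Nat.eq_zero_or_pos t with ht0 | ht0
    · rw [ht0] at htrunc
      simp only [Finset.range_zero, Finset.sum_empty] at htrunc
      have : ∑ i ∈ Finset.range N, min (nu i) k ≤ ∑ i ∈ Finset.range N, nu i :=
        Finset.sum_le_sum fun i _ => min_le_left _ _
      omega
    · have h1 := h t ht0
      have h2 : psum eta t = (∑ i ∈ Finset.range t, (eta i - k)) + t * k := by
        apply sum_sub_add
        intro i hi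
        have := (lt_conj_iff heta k i).mp (by omega)
        omega
      have h3 : psum nu t ≤ (∑ i ∈ Finset.range t, (nu i - k)) + t * k :=
        sum_le_sub_add nu t k
      have h4 : ∑ i ∈ Finset.range t, (nu i - k) ≤ ∑ i ∈ Finset.range N, (nu i - k) :=
        Finset.sum_le_sum_of_subset (Finset.range_subset_range.mpr ht)
      have h5 := hpsum_nu t ht0
      omega
  -- (2) → (3)
  have key23 : Dominates (conj eta) (conj nu) → Dominates (conj eta) (conj mu) := by
    intro h k
    have h1 := h k
    rw [psum_conj hnupart hNnu k, psum_conj heta hNeta k] at h1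
    rw [psum_conj hmu hNmu k, psum_conj heta hNeta k]
    refine le_trans (Finset.sum_le_sum fun i _ => ?_) h1
    have : mu i ≤ nu i := by simp only [hnudef]; omega
    omega
  -- (3) → (1)
  have key31 : Dominates (conj eta) (conj mu) →
      (∀ j, 1 ≤ j → psum eta j ≤ d + psum mu j) := by
    intro h j hj
    set M := N + j with hMdef
    have hMmu : ∀ i, M ≤ i → mu i = 0 := fun i hi => hNmu i (by omega)
    have hMeta : ∀ i, M ≤ i → eta i = 0 := fun i hi => hNeta i (by omega)
    set k := mu (j - 1) with hkdef
    have h3 := h k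
    rw [psum_conj hmu hMmu k, psum_conj heta hMeta k] at h3
    have hSTe : (∑ i ∈ Finset.range M, min (eta i) k) + (∑ i ∈ Finset.range M, (eta i - k))
        = ∑ i ∈ Finset.range M, eta i := by
      rw [← Finset.sum_add_distrib]
      exact Finset.sum_congr rfl fun i _ => by omega
    have hSTm : (∑ i ∈ Finset.range M, min (mu i) k) + (∑ i ∈ Finset.range M, (mu i - k))
        = ∑ i ∈ Finset.range M, mu i := by
      rw [← Finset.sum_add_distrib]
      exact Finset.sum_congr rfl fun i _ => by omega
    have hsme : psize mu = ∑ i ∈ Finset.range M, mu i := psize_eq hMmu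
    have hsee : psize eta = ∑ i ∈ Finset.range M, eta i := psize_eq hMeta
    have htm : ∑ i ∈ Finset.range M, (mu i - k) = ∑ i ∈ Finset.range j, (mu i - k) := by
      apply sum_sub_trunc mu j M k (by omega)
      intro i hi
      exact hmu.1 (by omega : j - 1 ≤ i)
    have hpm : psum mu j = (∑ i ∈ Finset.range j, (mu i - k)) + j * k := by
      apply sum_sub_add
      intro i hi
      exact hmu.1 (by omega : i ≤ j - 1)
    have hpe : psum eta j ≤ (∑ i ∈ Finset.range j, (eta i - k)) + j * k :=
      sum_le_sub_add eta j k
    have hsub : ∑ i ∈ Finset.range j, (eta i - k) ≤ ∑ i ∈ Finset.range M, (eta i - k) :=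
      Finset.sum_le_sum_of_subset (Finset.range_subset_range.mpr (by omega))
    omega
  rw [hunion]
  constructor
  · constructor
    · intro h
      exact key12 fun j hj => by have := h j hj; omega
    · intro h j hj
      have := key31 (key23 h) j hj
      omega
  · exact ⟨key23, fun h => key12 (key31 h)⟩

end DoubleMacdonald
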